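/- Let A ∈ ℝ^{n×n} be symmetric positive-definite and let (M_i), (R_i), (G_i), (P_i) be the NCG iterates started from M_0 ∈ ℝ^{n×n}. Then for every i ≥ 0 the residuals are orthogonal to all previous search directions: (R_{i+1}, P_j)_F = 0 for all j = 0, 1, …, i. -/

import Mathlib

open Matrix

/-- Frobenius inner product `(X,Y)_F = trace (Xᵀ Y)`. -/
noncomputable def finner {n : ℕ} (X Y : Matrix (Fin n) (Fin n) ℝ) : ℝ :=
  (Xᵀ * Y).trace

/-- Frobenius norm `‖X‖_F`. -/
noncomputable def fnorm {n : ℕ} (X : Matrix (Fin n) (Fin n) ℝ) : ℝ :=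
  Real.sqrt (finner X X)

/-- A-weighted Frobenius inner product `(X,Y)_{F,A} = trace (Xᵀ A Y)`. -/
noncomputable def finnerA {n : ℕ} (A X Y : Matrix (Fin n) (Fin n) ℝ) : ℝ :=
  (Xᵀ * A * Y).trace

/-- A-weighted Frobenius norm `‖X‖_{F,A}`. -/
noncomputable def fnormA {n : ℕ} (A X : Matrix (Fin n) (Fin n) ℝ) : ℝ :=
  Real.sqrt (finnerA A X X)

/-- Krylov subspace `K_i(B, X) = span {X, BX, …, B^(i-1) X}`. -/
noncomputable def krylov {n : ℕ} (i : ℕ) (B X : Matrix (Fin n) (Fin n) ℝ) :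
    Submodule ℝ (Matrix (Fin n) (Fin n) ℝ) :=
  Submodule.span ℝ {Y | ∃ j < i, Y = B ^ j * X}

section ncg_helpers
variable {n : ℕ}

lemma finner_comm (X Y : Matrix (Fin n) (Fin n) ℝ) : finner X Y = finner Y X := by
  unfold finner
  rw [← Matrix.trace_transpose (Xᵀ * Y), Matrix.transpose_mul, Matrix.transpose_transpose]

lemma finner_sub_right (X Y Z : Matrix (Fin n) (Fin n) ℝ) :
    finner X (Y - Z) = finner X Y - finner X Z := by
  simp [finner, Matrix.mul_sub]

lemma finner_add_right (X Y Z : Matrix (Fin n) (Fin n) ℝ) :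
    finner X (Y + Z) = finner X Y + finner X Z := by
  simp [finner, Matrix.mul_add]

lemma finner_smul_right (c : ℝ) (X Y : Matrix (Fin n) (Fin n) ℝ) :
    finner X (c • Y) = c * finner X Y := by
  simp [finner, Matrix.mul_smul]

lemma finner_neg_right (X Y : Matrix (Fin n) (Fin n) ℝ) :
    finner X (-Y) = -finner X Y := by
  simp [finner, Matrix.mul_neg]

lemma finner_sub_left (X Y Z : Matrix (Fin n) (Fin n) ℝ) :
    finner (X - Y) Z = finner X Z - finner Y Z := by
  simp [finner, Matrix.transpose_sub, Matrix.sub_mul]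

lemma finner_add_left (X Y Z : Matrix (Fin n) (Fin n) ℝ) :
    finner (X + Y) Z = finner X Z + finner Y Z := by
  simp [finner, Matrix.transpose_add, Matrix.add_mul]

lemma finner_smul_left (c : ℝ) (X Y : Matrix (Fin n) (Fin n) ℝ) :
    finner (c • X) Y = c * finner X Y := by
  simp [finner, Matrix.transpose_smul, Matrix.smul_mul]

lemma finner_Amul {A : Matrix (Fin n) (Fin n) ℝ} (hAT : Aᵀ = A)
    (X Y : Matrix (Fin n) (Fin n) ℝ) : finner (A * X) Y = finner X (A * Y) := by
  simp [finner, Matrix.transpose_mul, hAT, Matrix.mul_assoc]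

lemma ncg_aux (A : Matrix (Fin n) (Fin n) ℝ) (hAT : Aᵀ = A)
    (R P : ℕ → Matrix (Fin n) (Fin n) ℝ) (ρ σ : ℕ → ℝ)
    (hρ : ∀ i, ρ i = finner (R i) (A * R i))
    (hσ : ∀ i, σ i = finner (P i) (A * P i))
    (hρne : ∀ i, ρ i ≠ 0) (hσne : ∀ i, σ i ≠ 0)
    (hP0 : P 0 = A * R 0)
    (hRrec : ∀ i, R (i + 1) = R i - (ρ i / σ i) • (A * P i))
    (hPrec : ∀ i, P (i + 1) = A * R (i + 1) + (ρ (i + 1) / ρ i) • P i) :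
    ∀ i, (∀ j ≤ i, finner (R (i + 1)) (P j) = 0) ∧
         (∀ j ≤ i, finner (P (i + 1)) (A * P j) = 0) := by
  -- A * P i recovered from residual difference
  have hAP : ∀ i, A * P i = (σ i / ρ i) • (R i - R (i + 1)) := by
    intro i
    have h1 : R i - R (i + 1) = (ρ i / σ i) • (A * P i) := by
      rw [hRrec i]; abel
    have h2 : (σ i / ρ i) * (ρ i / σ i) = 1 := by
      field_simp [mul_comm]
      exact div_self (mul_ne_zero (hσne i) (hρne i))
    rw [h1, smul_smul, h2, one_smul]
  -- expansion of ⟨R (i+1), P j⟩ via the residual recurrence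
  have hRexp : ∀ i j, finner (R (i + 1)) (P j) =
      finner (R i) (P j) - (ρ i / σ i) * finner (P i) (A * P j) := by
    intro i j
    rw [hRrec i, finner_sub_left, finner_smul_left, finner_Amul hAT]
  -- ⟨R i, P i⟩ = ρ i, provided ⟨R i, P (i-1)⟩ = 0 when i ≥ 1
  have hRP0 : finner (R 0) (P 0) = ρ 0 := by
    rw [hP0, hρ 0]
  intro i
  induction i with
  | zero =>
    have hO : ∀ j ≤ 0, finner (R 1) (P j) = 0 := by
      intro j hj
      interval_cases j
      rw [hRexp 0 0, hRP0, ← hσ 0, div_mul_cancel₀ _ (hσne 0), sub_self]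
    refine ⟨hO, ?_⟩
    intro j hj
    interval_cases j
    -- ⟨R 1, A R 0⟩ = 0 and ⟨R 1, A R 1⟩ = ρ 1
    have h0 : finner (R 1) (A * R 0) = 0 := by
      rw [← hP0]; exact hO 0 le_rfl
    have hexp : finner (A * R 1) (A * P 0) =
        (σ 0 / ρ 0) * (finner (R 1) (A * R 0) - finner (R 1) (A * R 1)) := by
      rw [finner_Amul hAT, hAP 0, Matrix.mul_smul, finner_smul_right,
        Matrix.mul_sub, finner_sub_right]
    rw [hPrec 0, finner_add_left, finner_smul_left, hexp, h0, ← hρ 1, ← hσ 0]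
    field_simp
    ring
  | succ i ih =>
    obtain ⟨ihO, ihC⟩ := ih
    -- orthogonality at level i+1
    have hO : ∀ j ≤ i + 1, finner (R (i + 2)) (P j) = 0 := by
      intro j hj
      rcases Nat.lt_or_ge j (i + 1) with h | h
      · rw [hRexp (i + 1) j, ihO j (Nat.lt_succ_iff.mp h),
          ihC j (Nat.lt_succ_iff.mp h)]
        ring
      · have hji : j = i + 1 := le_antisymm hj h
        subst hji
        have hRP : finner (R (i + 1)) (P (i + 1)) = ρ (i + 1) := by
          rw [hPrec i, finner_add_right, finner_smul_right, ihO i le_rfl, ← hρ (i + 1)]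
          ring
        rw [hRexp (i + 1) (i + 1), hRP, ← hσ (i + 1),
          div_mul_cancel₀ _ (hσne (i + 1)), sub_self]
    refine ⟨hO, ?_⟩
    -- ⟨R (i+2), A R j⟩ = 0 for j ≤ i+1
    have hRAR : ∀ j ≤ i + 1, finner (R (i + 2)) (A * R j) = 0 := by
      intro j hj
      match j with
      | 0 => rw [← hP0]; exact hO 0 (Nat.zero_le _)
      | Nat.succ k =>
        have hk : k ≤ i + 1 := le_trans (Nat.le_succ k) hj
        have : A * R (k + 1) = P (k + 1) - (ρ (k + 1) / ρ k) • P k := by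
          rw [hPrec k]; abel
        rw [this, finner_sub_right, finner_smul_right, hO (k + 1) hj, hO k hk]
        ring
    intro j hj
    have hexp : finner (A * R (i + 2)) (A * P j) =
        (σ j / ρ j) * (finner (R (i + 2)) (A * R j) - finner (R (i + 2)) (A * R (j + 1))) := by
      rw [finner_Amul hAT, hAP j, Matrix.mul_smul, finner_smul_right,
        Matrix.mul_sub, finner_sub_right]
    rcases Nat.lt_or_ge j (i + 1) with h | h
    · rw [hPrec (i + 1), finner_add_left, finner_smul_left, hexp,
        hRAR j (Nat.le_of_lt h), hRAR (j + 1) h, ihC j (Nat.lt_succ_iff.mp h)]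
      ring
    · have hji : j = i + 1 := le_antisymm hj h
      subst hji
      rw [hPrec (i + 1), finner_add_left, finner_smul_left, hexp,
        hRAR (i + 1) le_rfl, ← hρ (i + 2), ← hσ (i + 1)]
      field_simp
      ring

end ncg_helpers

/-- NCG residuals are orthogonal to all previous search directions. -/
theorem ncg_residual_orth_directions {n : ℕ}
    (A : Matrix (Fin n) (Fin n) ℝ) (hA : A.PosDef)
    (M R G P : ℕ → Matrix (Fin n) (Fin n) ℝ)
    (hR : ∀ i, R i = 1 - A * M i)
    (hG : ∀ i, G i = -(A * R i))
    (hP0 : P 0 = -G 0)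
    (hM : ∀ i, M (i + 1) =
      M i + (-(finner (R i) (G i)) / finner (P i) (A * P i)) • P i)
    (hP : ∀ i, P (i + 1) =
      -G (i + 1) + (finner (R (i + 1)) (G (i + 1)) / finner (R i) (G i)) • P i)
    (hPA : ∀ j, finner (P j) (A * P j) ≠ 0)
    (hRG : ∀ j, finner (R j) (G j) ≠ 0)
    : ∀ i : ℕ, ∀ j ≤ i, finner (R (i + 1)) (P j) = 0 := by
  have hAT : Aᵀ = A := by simpa using hA.1.eq
  set ρ : ℕ → ℝ := fun i => finner (R i) (A * R i) with hρdef
  set σ : ℕ → ℝ := fun i => finner (P i) (A * P i) with hσdef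
  have hRGρ : ∀ i, finner (R i) (G i) = -ρ i := by
    intro i; rw [hG i, finner_neg_right]
  have hρne : ∀ i, ρ i ≠ 0 := by
    intro i h
    exact hRG i (by rw [hRGρ i, h, neg_zero])
  have hP0' : P 0 = A * R 0 := by rw [hP0, hG 0, neg_neg]
  have hRrec : ∀ i, R (i + 1) = R i - (ρ i / σ i) • (A * P i) := by
    intro i
    rw [hR (i + 1), hM i, Matrix.mul_add, Matrix.mul_smul, hRGρ i, neg_neg,
      sub_add_eq_sub_sub, ← hR i]
  have hPrec : ∀ i, P (i + 1) = A * R (i + 1) + (ρ (i + 1) / ρ i) • P i := by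
    intro i
    rw [hP i, hRGρ (i + 1), hRGρ i, hG (i + 1), neg_neg, neg_div_neg_eq]
  have := ncg_aux A hAT R P ρ σ (fun i => rfl) (fun i => rfl) hρne hPA
    hP0' hRrec hPrec
  exact fun i => (this i).1
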